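/- Let $q \geq 2$ and $n \geq 3$ be integers. Then $(q^n - q)/(q - 1) > \binom{n + q - 2}{n - 1}$. -/
import Mathlib

private lemma geomT (a : ℕ) : ∀ m, (a + 1) * (∑ i ∈ Finset.range m, (a+2)^i) + 1 = (a+2)^m := by
  intro m
  induction m with
  | zero => simp
  | succ m ih =>
    rw [Finset.sum_range_succ, Nat.mul_add, pow_succ]
    nlinarith [ih]

private lemma keyC (a : ℕ) : ∀ b, Nat.choose (b + a + 3) (a + 1) <
    (a + 2) * (∑ i ∈ Finset.range (b + 2), (a+2)^i) := by
  intro b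
  induction b with
  | zero =>
    simp only [Nat.zero_add]
    have h1 : Nat.choose (a + 3) (a + 1) = Nat.choose (a + 3) 2 := by
      rw [← Nat.choose_symm (by omega)]
      congr 1
      omega
    rw [h1, Nat.choose_two_right]
    have h2 : (a + 3) * (a + 3 - 1) / 2 < (a + 3) * (a + 2) := by
      have h3 : a + 3 - 1 = a + 2 := rfl
      rw [h3]
      exact Nat.div_lt_self (by positivity) (by omega)
    calc (a + 3) * (a + 3 - 1) / 2 < (a+3) * (a+2) := h2
      _ ≤ (a + 2) * ∑ i ∈ Finset.range 2, (a+2)^i := by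
          simp [Finset.sum_range_succ]
          nlinarith
  | succ b ih =>
    have hrec : Nat.choose (b + a + 3) (a + 1) * (b + a + 3 + 1) =
        Nat.choose (b + a + 3 + 1) (a + 1) * (b + a + 3 + 1 - (a + 1)) :=
      Nat.choose_mul_succ_eq (b + a + 3) (a + 1)
    have hstep : Nat.choose (b + 1 + a + 3) (a + 1) ≤ (a + 2) * Nat.choose (b + a + 3) (a + 1) := by
      have h2 : b + a + 3 + 1 - (a + 1) = b + 3 := by omega
      rw [h2] at hrec
      have h3 : b + 1 + a + 3 = b + a + 3 + 1 := by omega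
      rw [h3]
      have h4 : Nat.choose (b + a + 3 + 1) (a + 1) * (b + 3) ≤
          ((a + 2) * Nat.choose (b + a + 3) (a + 1)) * (b + 3) :=
        calc Nat.choose (b + a + 3 + 1) (a + 1) * (b + 3)
            = Nat.choose (b + a + 3) (a + 1) * (b + a + 3 + 1) := hrec.symm
          _ ≤ Nat.choose (b + a + 3) (a + 1) * ((a + 2) * (b + 3)) :=
              Nat.mul_le_mul_left _ (by nlinarith)
          _ = ((a + 2) * Nat.choose (b + a + 3) (a + 1)) * (b + 3) := by ring
      exact Nat.le_of_mul_le_mul_right h4 (by omega)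
    have hsum : (∑ i ∈ Finset.range (b + 1 + 2), (a+2)^i) =
        1 + (a + 2) * ∑ i ∈ Finset.range (b + 2), (a+2)^i := by
      rw [Finset.sum_range_succ', Finset.mul_sum]
      simp only [pow_zero, pow_succ]
      rw [Nat.add_comm]
      congr 1
      exact Finset.sum_congr rfl (fun i _ => mul_comm _ _)
    calc Nat.choose (b + 1 + a + 3) (a + 1)
        ≤ (a + 2) * Nat.choose (b + a + 3) (a + 1) := hstep
      _ < (a + 2) * ((a + 2) * ∑ i ∈ Finset.range (b + 2), (a+2)^i) :=
          mul_lt_mul_of_pos_left ih (by omega)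
      _ ≤ (a + 2) * ∑ i ∈ Finset.range (b + 1 + 2), (a+2)^i := by
          rw [hsum]; nlinarith

/-- For `q ≥ 2`, `n ≥ 3`: `(q^n - q)/(q-1) > C(n+q-2, n-1)`. -/
theorem stmt_8 (q n : ℕ) (hq : 2 ≤ q) (hn : 3 ≤ n) :
    (q ^ n - q) / (q - 1) > Nat.choose (n + q - 2) (n - 1) := by
  obtain ⟨a, rfl⟩ : ∃ a, q = a + 2 := ⟨q - 2, by omega⟩
  obtain ⟨b, rfl⟩ : ∃ b, n = b + 3 := ⟨n - 3, by omega⟩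
  have hsymm : Nat.choose (b + 3 + (a + 2) - 2) (b + 3 - 1) = Nat.choose (b + a + 3) (a + 1) := by
    have h1 : b + 3 + (a + 2) - 2 = b + a + 3 := by omega
    have h2 : b + 3 - 1 = b + 2 := by omega
    rw [h1, h2, ← Nat.choose_symm (show b + 2 ≤ b + a + 3 by omega)]
    congr 1
    omega
  rw [gt_iff_lt, hsymm]
  have hg : (a + 1) * (∑ i ∈ Finset.range (b+2), (a+2)^i) + 1 = (a+2)^(b+2) := geomT a (b+2)
  have hp : (a+2)^(b+3) = (a+2) * ((a+1) * (∑ i ∈ Finset.range (b+2), (a+2)^i) + 1) := by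
    rw [hg, pow_succ]; ring
  have hk : Nat.choose (b + a + 3) (a + 1) < (a+2) * (∑ i ∈ Finset.range (b+2), (a+2)^i) :=
    keyC a b
  have hdiv : Nat.choose (b + a + 3) (a + 1) + 1 ≤ ((a+2)^(b+3) - (a+2)) / (a + 2 - 1) := by
    rw [Nat.le_div_iff_mul_le (by omega)]
    refine Nat.le_sub_of_add_le ?_
    have h5 : a + 2 - 1 = a + 1 := rfl
    rw [h5, hp]
    nlinarith
  omega
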